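/- Fix 1 < p ≤ q < ∞, p' = p/(p-1), and let k ∈ M_+(ℝ_+). Then there is a constant c > 0 such that [ ∫_{ℝ_+} ( ∫_x^∞ k(y) f(y) dy )^q dx ]^{1/q} ≤ c [ ∫_{ℝ_+} f(y)^p dy ]^{1/p} for all f ∈ M_+(ℝ_+), if and only if sup_{x>0} x ( ∫_x^∞ k(y)^{p'} dy )^{q/p'} < ∞. -/

import Mathlib

open MeasureTheory Set
open scoped ENNReal

noncomputable section

/-- The positive integral operator `T_K` on `ℝ₊`. -/
def TK (K : ℝ → ℝ → ℝ≥0∞) (f : ℝ → ℝ≥0∞) (x : ℝ) : ℝ≥0∞ :=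
  ∫⁻ y in Ioi (0:ℝ), K x y * f y

/-- Distribution function `μ_f(λ) = |{x ∈ ℝ₊ : f x > λ}|`. -/
def distrib (f : ℝ → ℝ≥0∞) (l : ℝ≥0∞) : ℝ≥0∞ :=
  volume {x : ℝ | 0 < x ∧ l < f x}

/-- Nonincreasing rearrangement `f*(t) = inf{λ : μ_f(λ) ≤ t}`. -/
def rearr (f : ℝ → ℝ≥0∞) (t : ℝ) : ℝ≥0∞ :=
  sInf {l : ℝ≥0∞ | distrib f l ≤ ENNReal.ofReal t}

/-- Extension of a real function to `ℝ≥0∞`. -/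
def extE (F : ℝ → ℝ) (a : ℝ≥0∞) : ℝ≥0∞ :=
  if a = ⊤ then ⊤ else ENNReal.ofReal (F a.toReal)

/-- Orlicz–Lorentz gauge functional `ρ_{Φ,u}`. -/
def ogauge (F : ℝ → ℝ) (u : ℝ → ℝ) (f : ℝ → ℝ≥0∞) : ℝ≥0∞ :=
  sInf {l : ℝ≥0∞ | 0 < l ∧
    (∫⁻ x in Ioi (0:ℝ), extE F (f x / l) * ENNReal.ofReal (u x)) ≤ 1}

/-- `F` is an N-function with density `φ`: `F x = ∫_0^x φ`, `φ` increasing from `ℝ₊` onto `ℝ₊`. -/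
def IsNFunction (F φ : ℝ → ℝ) : Prop :=
  StrictMonoOn φ (Ioi 0) ∧ MapsTo φ (Ioi 0) (Ioi 0) ∧ SurjOn φ (Ioi 0) (Ioi 0) ∧
    ∀ x : ℝ, 0 ≤ x → F x = ∫ y in (0:ℝ)..x, φ y

/-- `F(2t) ≈ F(t)` on `ℝ₊`. -/
def Doubling (F : ℝ → ℝ) : Prop := ∃ C > 0, ∀ t > 0, F (2 * t) ≤ C * F t

/-- A weight: nonnegative, measurable, locally integrable on `ℝ₊`. -/
def IsWeight (u : ℝ → ℝ) : Prop :=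
  Measurable u ∧ (∀ x, 0 ≤ u x) ∧ LocallyIntegrableOn u (Ioi 0)

/-- `U(x) = ∫_0^x u`. -/
def Uw (u : ℝ → ℝ) (x : ℝ) : ℝ := ∫ t in (0:ℝ)..x, u t

/-- `Ψ` (with density `ψ`) is the complementary N-function of the N-function `Φ`
(with density `φ`), i.e. `ψ = φ⁻¹` and `Ψ t = ∫_0^t φ⁻¹`. -/
def IsComplementary (F φ G ψ : ℝ → ℝ) : Prop :=
  IsNFunction F φ ∧ IsNFunction G ψ ∧ InvOn ψ φ (Ioi 0) (Ioi 0)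

/-- `g` is the inverse of `f` on `[0,∞)`. -/
def IsInverseOn (g f : ℝ → ℝ) : Prop :=
  (∀ x ≥ 0, g (f x) = x) ∧ (∀ y ≥ 0, f (g y) = y)

/-- Iterated rearrangement `L(t,s) = (K^{*₂})^{*₁}(t,s)`. -/
def iterRearr (K : ℝ → ℝ → ℝ≥0∞) (t s : ℝ) : ℝ≥0∞ :=
  rearr (fun x => rearr (fun y => K x y) s) t

/-- `α(λ,x) = ∫_x^∞ Φ(λ/U(y)) u(y) dy`. -/
def hardyAlpha (F : ℝ → ℝ) (u : ℝ → ℝ) (lam x : ℝ) : ℝ≥0∞ :=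
  ∫⁻ y in Ioi x, extE F (ENNReal.ofReal lam / ENNReal.ofReal (Uw u y)) * ENNReal.ofReal (u y)

/-- `β(λ,x) = ∫_x^∞ Φ(λ/y) u(y) dy`. -/
def hardyBeta (F : ℝ → ℝ) (u : ℝ → ℝ) (lam x : ℝ) : ℝ≥0∞ :=
  ∫⁻ y in Ioi x, ENNReal.ofReal (F (lam / y)) * ENNReal.ofReal (u y)

/-- The Hardy-averaging conditions (14)–(15) for an N-function `Φ` (density `φ`,
inverse density `ψ = φ⁻¹`) and weight `u`. -/
def HardyConditions (F φ ψ u : ℝ → ℝ) : Prop :=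
  ∃ c > 0, (∀ lam > 0, ∀ x > 0,
      extE φ (ENNReal.ofReal c * hardyAlpha F u lam x / ENNReal.ofReal lam) *
        ENNReal.ofReal (Uw u x) ≤ ENNReal.ofReal (lam / c)) ∧
    (∀ lam > 0, ∀ x > 0,
      (∫⁻ y in Ioo (0:ℝ) x,
        extE ψ ((ENNReal.ofReal c * hardyBeta F u lam x / ENNReal.ofReal lam) *
          ENNReal.ofReal (y / Uw u y)) * ENNReal.ofReal (y * u y / Uw u y))
        ≤ ENNReal.ofReal (lam / c))



lemma iSup_rpow' {ι : Sort*} (a : ι → ℝ≥0∞) {e : ℝ} (he : 0 < e) :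
    (⨆ i, a i) ^ e = ⨆ i, a i ^ e := by
  refine le_antisymm ?_ (iSup_le fun i => ENNReal.rpow_le_rpow (le_iSup a i) he.le)
  have h1 : (⨆ i, a i) ≤ (⨆ i, a i ^ e) ^ e⁻¹ := by
    refine iSup_le fun i => ?_
    have : a i = (a i ^ e) ^ e⁻¹ := by
      rw [← ENNReal.rpow_mul, mul_inv_cancel₀ he.ne', ENNReal.rpow_one]
    rw [this]
    exact ENNReal.rpow_le_rpow (le_iSup (fun i => a i ^ e) i) (by positivity)
  calc (⨆ i, a i) ^ e ≤ ((⨆ i, a i ^ e) ^ e⁻¹) ^ e := ENNReal.rpow_le_rpow h1 he.le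
    _ = ⨆ i, a i ^ e := by rw [← ENNReal.rpow_mul, inv_mul_cancel₀ he.ne', ENNReal.rpow_one]

lemma tsum_rpow_le' {ι : Type*} (c : ι → ℝ≥0∞) {r : ℝ} (hr : 1 ≤ r) :
    ∑' i, c i ^ r ≤ (∑' i, c i) ^ r := by
  set S := ∑' i, c i with hS
  have hr0 : (0:ℝ) < r := lt_of_lt_of_le one_pos hr
  rcases eq_or_ne S ⊤ with h | hSt
  · rw [h, ENNReal.top_rpow_of_pos hr0]; exact le_top
  rcases eq_or_ne S 0 with h | hS0
  · have hc : ∀ i, c i = 0 := by simpa [hS, ENNReal.tsum_eq_zero] using h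
    simp [hc, ENNReal.zero_rpow_of_pos hr0, h]
  have key : ∀ i, c i ^ r ≤ S ^ (r - 1) * c i := by
    intro i
    rcases eq_or_ne (c i) 0 with h0 | h0
    · simp [h0, ENNReal.zero_rpow_of_pos hr0]
    have hci : c i ≠ ⊤ := ne_top_of_le_ne_top hSt (ENNReal.le_tsum i)
    calc c i ^ r = c i ^ (r - 1) * c i := by
          rw [show r = (r-1) + 1 by ring, ENNReal.rpow_add _ _ h0 hci, ENNReal.rpow_one,
            show r - 1 + 1 - 1 = r - 1 by ring]
      _ ≤ S ^ (r - 1) * c i :=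
          mul_le_mul_left (ENNReal.rpow_le_rpow (ENNReal.le_tsum i) (by linarith)) _
  calc ∑' i, c i ^ r ≤ ∑' i, S ^ (r - 1) * c i := ENNReal.tsum_le_tsum key
    _ = S ^ (r - 1) * S := by rw [ENNReal.tsum_mul_left]
    _ = S ^ r := by
        rw [show r = (r-1) + 1 by ring, ENNReal.rpow_add _ _ hS0 hSt, ENNReal.rpow_one,
          show r - 1 + 1 - 1 = r - 1 by ring]

lemma tsum_mul_le_Lp_mul_Lq' {ι : Type*} [Countable ι] [MeasurableSpace ι]
    [MeasurableSingletonClass ι] {p q : ℝ} (hpq : p.HolderConjugate q) (F G : ι → ℝ≥0∞) :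
    ∑' n, F n * G n ≤ (∑' n, F n ^ p) ^ (1/p) * (∑' n, G n ^ q) ^ (1/q) := by
  have := ENNReal.lintegral_mul_le_Lp_mul_Lq (Measure.count (α := ι)) hpq
    (measurable_of_countable F).aemeasurable (measurable_of_countable G).aemeasurable
  simpa [lintegral_count] using this

lemma geom_eq {a : ℝ} (n : ℕ) : (2:ℝ≥0∞) ^ (-(n:ℝ) * a) = ((2:ℝ≥0∞) ^ (-a)) ^ (n:ℕ) := by
  rw [← ENNReal.rpow_natCast ((2:ℝ≥0∞) ^ (-a)) n, ← ENNReal.rpow_mul]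
  ring_nf

lemma geom_lt_top {a : ℝ} (ha : 0 < a) : (∑' n : ℕ, (2:ℝ≥0∞) ^ (-(n:ℝ) * a)) ≠ ⊤ := by
  have h1 : (2:ℝ≥0∞) ^ (-a) < 1 :=
    ENNReal.rpow_lt_one_of_one_lt_of_neg (by norm_num) (by linarith)
  calc (∑' n : ℕ, (2:ℝ≥0∞) ^ (-(n:ℝ) * a)) = ∑' n : ℕ, ((2:ℝ≥0∞) ^ (-a)) ^ (n:ℕ) := by
        exact tsum_congr fun n => geom_eq n
    _ = (1 - (2:ℝ≥0∞) ^ (-a))⁻¹ := ENNReal.tsum_geometric _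
    _ ≠ ⊤ := by
        rw [Ne, ENNReal.inv_eq_top, tsub_eq_zero_iff_le]
        exact not_le.mpr h1

lemma discrete_step {δ r : ℝ} (hδ : 0 < δ) (hr : 1 ≤ r) :
    ∃ C : ℝ≥0∞, C ≠ ⊤ ∧ ∀ c : ℤ → ℝ≥0∞,
      (∑' j : ℤ, (∑' n : ℕ, (2:ℝ≥0∞) ^ (-(n:ℝ) * δ) * c (j + n)) ^ r) ≤
        C * (∑' j : ℤ, c j) ^ r := by
  set G := ∑' n : ℕ, (2:ℝ≥0∞) ^ (-(n:ℝ) * δ) with hG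
  have hGt : G ≠ ⊤ := geom_lt_top hδ
  have shift : ∀ (c : ℤ → ℝ≥0∞) (n : ℕ), ∑' j : ℤ, c (j + n) = ∑' j : ℤ, c j :=
    fun c n => (Equiv.addRight (n:ℤ)).tsum_eq c
  rcases eq_or_lt_of_le hr with hr1 | hr1
  · refine ⟨G, hGt, fun c => ?_⟩
    have : ∀ j : ℤ, (∑' n : ℕ, (2:ℝ≥0∞) ^ (-(n:ℝ) * δ) * c (j + n)) ^ r =
        ∑' n : ℕ, (2:ℝ≥0∞) ^ (-(n:ℝ) * δ) * c (j + n) := by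
      intro j; rw [← hr1, ENNReal.rpow_one]
    rw [tsum_congr this, ENNReal.tsum_comm]
    calc ∑' (n : ℕ), ∑' (j : ℤ), (2:ℝ≥0∞) ^ (-(n:ℝ) * δ) * c (j + n)
        = ∑' (n : ℕ), (2:ℝ≥0∞) ^ (-(n:ℝ) * δ) * ∑' (j : ℤ), c (j + n) := by
          exact tsum_congr fun n => ENNReal.tsum_mul_left
      _ = ∑' (n : ℕ), (2:ℝ≥0∞) ^ (-(n:ℝ) * δ) * ∑' (j : ℤ), c j := by
          exact tsum_congr fun n => by rw [shift]
      _ = G * ∑' (j : ℤ), c j := ENNReal.tsum_mul_right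
      _ = G * (∑' (j : ℤ), c j) ^ r := by rw [← hr1, ENNReal.rpow_one]
      _ ≤ G * (∑' (j : ℤ), c j) ^ r := le_rfl
  · -- 1 < r
    have hrc : r.HolderConjugate (Real.conjExponent r) := Real.HolderConjugate.conjExponent hr1
    set r' := Real.conjExponent r with hr'
    have hr0 : (0:ℝ) < r := by linarith
    have hr'0 : (0:ℝ) < r' := hrc.symm.pos
    refine ⟨G ^ (r / r') * G, by
      exact ENNReal.mul_ne_top (ENNReal.rpow_lt_top_of_nonneg (by positivity) hGt).ne hGt,
      fun c => ?_⟩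
    have key : ∀ j : ℤ, (∑' n : ℕ, (2:ℝ≥0∞) ^ (-(n:ℝ) * δ) * c (j + n)) ^ r ≤
        G ^ (r / r') * ∑' n : ℕ, (2:ℝ≥0∞) ^ (-(n:ℝ) * δ) * c (j + n) ^ r := by
      intro j
      have hsplit : ∀ n : ℕ, (2:ℝ≥0∞) ^ (-(n:ℝ) * δ) * c (j + n) =
          ((2:ℝ≥0∞) ^ (-(n:ℝ) * δ / r')) * ((2:ℝ≥0∞) ^ (-(n:ℝ) * δ / r) * c (j + n)) := by
        intro n
        have hx : ∀ x : ℝ, x/r' + x/r = x := fun x => by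
          rw [div_eq_mul_inv, div_eq_mul_inv, ← mul_add, add_comm, hrc.inv_add_inv_eq_one,
            mul_one]
        rw [← mul_assoc, ← ENNReal.rpow_add _ _ (by norm_num) (by norm_num), hx]
      have hH := tsum_mul_le_Lp_mul_Lq' (hrc.symm)
        (fun n : ℕ => (2:ℝ≥0∞) ^ (-(n:ℝ) * δ / r'))
        (fun n : ℕ => (2:ℝ≥0∞) ^ (-(n:ℝ) * δ / r) * c (j + n))
      rw [tsum_congr hsplit]
      have e1 : ∀ n : ℕ, ((2:ℝ≥0∞) ^ (-(n:ℝ) * δ / r')) ^ r' = (2:ℝ≥0∞) ^ (-(n:ℝ) * δ) := by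
        intro n; rw [← ENNReal.rpow_mul, div_mul_cancel₀ _ hr'0.ne']
      have e2 : ∀ n : ℕ, ((2:ℝ≥0∞) ^ (-(n:ℝ) * δ / r) * c (j + n)) ^ r =
          (2:ℝ≥0∞) ^ (-(n:ℝ) * δ) * c (j + n) ^ r := by
        intro n
        rw [ENNReal.mul_rpow_of_nonneg _ _ hr0.le, ← ENNReal.rpow_mul,
          div_mul_cancel₀ _ hr0.ne']
      rw [tsum_congr e1, tsum_congr e2] at hH
      calc (∑' n : ℕ, ((2:ℝ≥0∞) ^ (-(n:ℝ) * δ / r')) *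
              ((2:ℝ≥0∞) ^ (-(n:ℝ) * δ / r) * c (j + n))) ^ r
          ≤ (G ^ (1/r') * (∑' n : ℕ, (2:ℝ≥0∞) ^ (-(n:ℝ) * δ) * c (j + n) ^ r) ^ (1/r)) ^ r :=
            ENNReal.rpow_le_rpow hH hr0.le
        _ = G ^ (r/r') * ∑' n : ℕ, (2:ℝ≥0∞) ^ (-(n:ℝ) * δ) * c (j + n) ^ r := by
            rw [ENNReal.mul_rpow_of_nonneg _ _ hr0.le, ← ENNReal.rpow_mul,
              ← ENNReal.rpow_mul, one_div_mul_cancel hr0.ne', ENNReal.rpow_one,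
              one_div, inv_mul_eq_div]
    calc ∑' j : ℤ, (∑' n : ℕ, (2:ℝ≥0∞) ^ (-(n:ℝ) * δ) * c (j + n)) ^ r
        ≤ ∑' j : ℤ, G ^ (r/r') * ∑' n : ℕ, (2:ℝ≥0∞) ^ (-(n:ℝ) * δ) * c (j + n) ^ r :=
          ENNReal.tsum_le_tsum key
      _ = G ^ (r/r') * ∑' j : ℤ, ∑' n : ℕ, (2:ℝ≥0∞) ^ (-(n:ℝ) * δ) * c (j + n) ^ r :=
          ENNReal.tsum_mul_left
      _ = G ^ (r/r') * (G * ∑' j : ℤ, c j ^ r) := by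
          rw [ENNReal.tsum_comm]
          congr 1
          calc ∑' (n:ℕ), ∑' (j:ℤ), (2:ℝ≥0∞) ^ (-(n:ℝ) * δ) * c (j + n) ^ r
              = ∑' (n:ℕ), (2:ℝ≥0∞) ^ (-(n:ℝ) * δ) * ∑' (j:ℤ), c (j + n) ^ r :=
                tsum_congr fun n => ENNReal.tsum_mul_left
            _ = ∑' (n:ℕ), (2:ℝ≥0∞) ^ (-(n:ℝ) * δ) * ∑' (j:ℤ), c j ^ r :=
                tsum_congr fun n => by rw [shift (fun j => c j ^ r)]
            _ = G * ∑' (j:ℤ), c j ^ r := ENNReal.tsum_mul_right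
      _ ≤ G ^ (r/r') * (G * (∑' j : ℤ, c j) ^ r) :=
          mul_le_mul_right (mul_le_mul_right (tsum_rpow_le' c hr) _) _
      _ = G ^ (r/r') * G * (∑' j : ℤ, c j) ^ r := by ring

section Nec
variable {p q p' : ℝ} {k : ℝ → ℝ≥0∞}

lemma conj_facts (hp : 1 < p) (hp' : p' = p / (p - 1)) :
    p.HolderConjugate p' := (Real.holderConjugate_iff_eq_conjExponent hp).2 hp'

lemma necessity (hp : 1 < p) (hpq : p ≤ q) (hp' : p' = p / (p - 1))
    (hk : Measurable k) {c : ℝ} (hc : 0 < c)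
    (hineq : ∀ f : ℝ → ℝ≥0∞, Measurable f →
      (∫⁻ x in Ioi (0:ℝ), (∫⁻ y in Ioi x, k y * f y) ^ q) ^ (1 / q) ≤
        ENNReal.ofReal c * (∫⁻ y in Ioi (0:ℝ), f y ^ p) ^ (1 / p)) :
    (⨆ x ∈ Ioi (0:ℝ),
      ENNReal.ofReal x * (∫⁻ y in Ioi x, k y ^ p') ^ (q / p')) < ⊤ := by
  have hpc := conj_facts hp hp'
  have hp0 : (0:ℝ) < p := hpc.pos
  have hq0 : (0:ℝ) < q := lt_of_lt_of_le hp0 hpq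
  have hp'0 : (0:ℝ) < p' := hpc.symm.pos
  have hqp'0 : (0:ℝ) < q / p' := div_pos hq0 hp'0
  set h : ℝ → ℝ≥0∞ := fun y => k y ^ p' with hh
  have hhm : Measurable h := hk.pow_const p'
  -- the key pointwise bound
  have key : ∀ x ∈ Ioi (0:ℝ), ENNReal.ofReal x * (∫⁻ y in Ioi x, h y) ^ (q / p') ≤
      (ENNReal.ofReal c) ^ q := by
    intro x hx
    rw [mem_Ioi] at hx
    -- truncated functions
    set g : ℕ → ℝ → ℝ≥0∞ := fun n =>
      (Ioc x (x + n)).indicator (fun y => (min (h y) n) ^ (1/p)) with hg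
    set A : ℕ → ℝ≥0∞ := fun n => ∫⁻ y in Ioc x (x + n), min (h y) n with hA
    have hgm : ∀ n, Measurable (g n) := fun n =>
      ((hhm.min measurable_const).pow_const _).indicator measurableSet_Ioc
    have hsub : ∀ n : ℕ, Ioc x (x + n) ⊆ Ioi (0:ℝ) := fun n y hy => lt_trans hx hy.1
    have hAfin : ∀ n : ℕ, A n ≠ ⊤ := by
      intro n
      have : A n ≤ ∫⁻ _ in Ioc x (x + n), (n:ℝ≥0∞) :=
        setLIntegral_mono' measurableSet_Ioc (fun y _ => min_le_right _ _)
      rw [setLIntegral_const] at this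
      refine ne_top_of_le_ne_top ?_ this
      exact ENNReal.mul_ne_top (ENNReal.natCast_ne_top n) (by simp [Real.volume_Ioc])
    -- ∫ gₙ^p = A n
    have hgp : ∀ n : ℕ, (∫⁻ y in Ioi (0:ℝ), g n y ^ p) = A n := by
      intro n
      have hcong : ∀ y, g n y ^ p = (Ioc x (x + n)).indicator (fun y => min (h y) n) y := by
        intro y
        by_cases hy : y ∈ Ioc x (x + n)
        · simp only [hg, indicator_of_mem hy]
          rw [← ENNReal.rpow_mul, one_div, inv_mul_cancel₀ hp0.ne', ENNReal.rpow_one]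
        · simp [hg, indicator_of_notMem hy, ENNReal.zero_rpow_of_pos hp0]
      rw [lintegral_congr hcong, lintegral_indicator measurableSet_Ioc,
        Measure.restrict_restrict measurableSet_Ioc,
        inter_eq_left.mpr (hsub n)]
    -- lower bound for the inner integral
    have hTlow : ∀ n : ℕ, ∀ t ∈ Ioo (0:ℝ) x, A n ≤ ∫⁻ y in Ioi t, k y * g n y := by
      intro n t ht
      have hptw : ∀ y ∈ Ioc x (x + (n:ℝ)), min (h y) n ≤ k y * g n y := by
        intro y hy
        rcases eq_or_ne (min (h y) n) 0 with h0 | h0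
        · simp [h0]
        have hfin : min (h y) (n:ℝ≥0∞) ≠ ⊤ :=
          ne_top_of_le_ne_top (ENNReal.natCast_ne_top n) (min_le_right _ _)
        have hgy : g n y = (min (h y) n) ^ (1/p) := by
          simp [hg, indicator_of_mem hy]
        have hky : (min (h y) (n:ℝ≥0∞)) ^ (1/p') ≤ k y := by
          have : (h y) ^ (1/p') = k y := by
            rw [hh]
            rw [← ENNReal.rpow_mul, mul_one_div, div_self hp'0.ne', ENNReal.rpow_one]
          rw [← this]
          exact ENNReal.rpow_le_rpow (min_le_left _ _) (by positivity)
        calc min (h y) (n:ℝ≥0∞)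
            = (min (h y) n) ^ (1/p') * (min (h y) n) ^ (1/p) := by
              rw [← ENNReal.rpow_add _ _ h0 hfin]
              rw [show 1/p' + 1/p = 1 by
                have := hpc.inv_add_inv_eq_one; rw [inv_eq_one_div, inv_eq_one_div] at this
                linarith]
              exact (ENNReal.rpow_one _).symm
          _ ≤ k y * g n y := by rw [hgy]; exact mul_le_mul_left hky _
      calc A n ≤ ∫⁻ y in Ioc x (x + (n:ℝ)), k y * g n y :=
            setLIntegral_mono' measurableSet_Ioc hptw
        _ ≤ ∫⁻ y in Ioi t, k y * g n y :=
            lintegral_mono_set (fun y hy => lt_trans ht.2 hy.1)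
    -- main chain for each n
    have hlow2 : ∀ n : ℕ, A n * (ENNReal.ofReal x) ^ (1/q) ≤
        ENNReal.ofReal c * A n ^ (1/p) := by
      intro n
      have h1 : A n ^ q * ENNReal.ofReal x ≤
          ∫⁻ t in Ioi (0:ℝ), (∫⁻ y in Ioi t, k y * g n y) ^ q := by
        calc A n ^ q * ENNReal.ofReal x
            = ∫⁻ _ in Ioo (0:ℝ) x, A n ^ q := by
              rw [setLIntegral_const, Real.volume_Ioo, sub_zero]
          _ ≤ ∫⁻ t in Ioo (0:ℝ) x, (∫⁻ y in Ioi t, k y * g n y) ^ q :=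
              setLIntegral_mono' measurableSet_Ioo
                (fun t ht => ENNReal.rpow_le_rpow (hTlow n t ht) hq0.le)
          _ ≤ ∫⁻ t in Ioi (0:ℝ), (∫⁻ y in Ioi t, k y * g n y) ^ q :=
              lintegral_mono_set (fun t ht => ht.1)
      have h2 := hineq (g n) (hgm n)
      rw [hgp n] at h2
      calc A n * (ENNReal.ofReal x) ^ (1/q)
          = (A n ^ q * ENNReal.ofReal x) ^ (1/q) := by
            rw [ENNReal.mul_rpow_of_nonneg _ _ (by positivity), ← ENNReal.rpow_mul,
              mul_one_div, div_self hq0.ne', ENNReal.rpow_one]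
        _ ≤ (∫⁻ t in Ioi (0:ℝ), (∫⁻ y in Ioi t, k y * g n y) ^ q) ^ (1/q) :=
            ENNReal.rpow_le_rpow h1 (by positivity)
        _ ≤ ENNReal.ofReal c * A n ^ (1/p) := h2
    have hXA : ∀ n : ℕ, ENNReal.ofReal x * (A n) ^ (q/p') ≤ (ENNReal.ofReal c) ^ q := by
      intro n
      rcases eq_or_ne (A n) 0 with h0 | h0
      · rw [h0, ENNReal.zero_rpow_of_pos hqp'0, mul_zero]
        exact zero_le
      have h3 := ENNReal.rpow_le_rpow (hlow2 n) hq0.le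
      rw [ENNReal.mul_rpow_of_nonneg _ _ hq0.le, ← ENNReal.rpow_mul,
        one_div_mul_cancel hq0.ne', ENNReal.rpow_one,
        ENNReal.mul_rpow_of_nonneg _ _ hq0.le, ← ENNReal.rpow_mul (A n)] at h3
      have hqp : A n ^ ((1/p) * q) = A n ^ (q/p) := by rw [mul_comm, mul_one_div]
      rw [hqp] at h3
      have hAq : A n ^ (q/p) ≠ 0 := by
        simp [ENNReal.rpow_eq_zero_iff, h0, hAfin n, not_lt.mpr (div_nonneg hq0.le hp0.le)]
      have hAqt : A n ^ (q/p) ≠ ⊤ := by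
        exact (ENNReal.rpow_lt_top_of_nonneg (div_nonneg hq0.le hp0.le) (hAfin n)).ne
      have hexp : q - q/p = q/p' := by
        have h1 : p - 1 ≠ 0 := ne_of_gt (by linarith)
        have h2 : p ≠ 0 := by positivity
        rw [hp', div_div_eq_mul_div]
        field_simp
      calc ENNReal.ofReal x * (A n) ^ (q/p')
          = (A n ^ q * ENNReal.ofReal x) / A n ^ (q/p) := by
            rw [← hexp, ENNReal.rpow_sub _ _ h0 (hAfin n), mul_comm, mul_div_assoc]
            simp [div_eq_mul_inv]; ring
        _ ≤ ((ENNReal.ofReal c) ^ q * A n ^ (q/p)) / A n ^ (q/p) :=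
            ENNReal.div_le_div_right h3 _
        _ = (ENNReal.ofReal c) ^ q := by
            rw [mul_div_assoc, ENNReal.div_self hAq hAqt, mul_one]
    -- pass to the limit
    have hsupA : (∫⁻ y in Ioi x, h y) ≤ ⨆ n, A n := by
      set F : ℕ → ℝ → ℝ≥0∞ := fun n =>
        (Ioc x (x + (n:ℝ))).indicator (fun y => min (h y) n) with hF
      have hFm : ∀ n, Measurable (F n) := fun n =>
        (hhm.min measurable_const).indicator measurableSet_Ioc
      have hFmono : Monotone F := by
        intro a b hab y
        by_cases hy : y ∈ Ioc x (x + (a:ℝ))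
        · have hy' : y ∈ Ioc x (x + (b:ℝ)) :=
            ⟨hy.1, hy.2.trans (by simp [Nat.cast_le.mpr hab])⟩
          simp only [hF, indicator_of_mem hy, indicator_of_mem hy']
          exact min_le_min le_rfl (Nat.cast_le.mpr hab)
        · simp [hF, indicator_of_notMem hy]
      have hFsup : ∀ y ∈ Ioi x, h y ≤ ⨆ n, F n y := by
        intro y hy
        rw [mem_Ioi] at hy
        obtain ⟨N1, hN1⟩ := exists_nat_ge (y - x)
        rcases eq_or_ne (h y) ⊤ with htop | hfin
        · rw [htop, ← ENNReal.iSup_natCast]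
          refine iSup_le fun m => le_iSup_of_le (max N1 m) ?_
          have hmem : y ∈ Ioc x (x + ((max N1 m : ℕ):ℝ)) := by
            refine ⟨hy, ?_⟩
            have : (N1:ℝ) ≤ ((max N1 m : ℕ):ℝ) := Nat.cast_le.mpr (le_max_left _ _)
            linarith
          rw [hF]
          simp only [indicator_of_mem hmem, htop]
          exact le_min le_top (Nat.cast_le.mpr (le_max_right _ _))
        · obtain ⟨N2, hN2⟩ := ENNReal.exists_nat_gt hfin
          refine le_iSup_of_le (max N1 N2) ?_
          have hmem : y ∈ Ioc x (x + ((max N1 N2 : ℕ):ℝ)) := by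
            refine ⟨hy, ?_⟩
            have : (N1:ℝ) ≤ ((max N1 N2 : ℕ):ℝ) := Nat.cast_le.mpr (le_max_left _ _)
            linarith
          rw [hF]
          simp only [indicator_of_mem hmem]
          refine le_min le_rfl ?_
          exact le_trans hN2.le (Nat.cast_le.mpr (le_max_right _ _))
      have hAint : ∀ n : ℕ, (∫⁻ y in Ioi x, F n y) = A n := by
        intro n
        rw [hF]
        rw [lintegral_indicator measurableSet_Ioc,
          Measure.restrict_restrict measurableSet_Ioc,
          inter_eq_left.mpr Ioc_subset_Ioi_self]
      calc (∫⁻ y in Ioi x, h y) ≤ ∫⁻ y in Ioi x, ⨆ n, F n y :=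
            setLIntegral_mono' measurableSet_Ioi hFsup
        _ = ⨆ n, ∫⁻ y in Ioi x, F n y := lintegral_iSup hFm hFmono
        _ = ⨆ n, A n := by simp only [hAint]
    calc ENNReal.ofReal x * (∫⁻ y in Ioi x, h y) ^ (q/p')
        ≤ ENNReal.ofReal x * (⨆ n, A n) ^ (q/p') :=
          mul_le_mul_right (ENNReal.rpow_le_rpow hsupA hqp'0.le) _
      _ = ⨆ n, ENNReal.ofReal x * (A n) ^ (q/p') := by
          rw [iSup_rpow' _ hqp'0, ENNReal.mul_iSup]
      _ ≤ (ENNReal.ofReal c) ^ q := iSup_le hXA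
  have hfin : (⨆ x ∈ Ioi (0:ℝ),
      ENNReal.ofReal x * (∫⁻ y in Ioi x, k y ^ p') ^ (q / p')) ≤ (ENNReal.ofReal c) ^ q :=
    iSup₂_le key
  exact lt_of_le_of_lt hfin
    (ENNReal.rpow_lt_top_of_nonneg hq0.le ENNReal.ofReal_ne_top)

end Nec

lemma conj_facts' {p p' : ℝ} (hp : 1 < p) (hp' : p' = p / (p - 1)) :
    p.HolderConjugate p' := (Real.holderConjugate_iff_eq_conjExponent hp).2 hp'

section Suff
variable {p q p' : ℝ} {k : ℝ → ℝ≥0∞}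

lemma sufficiency (hp : 1 < p) (hpq : p ≤ q) (hp' : p' = p / (p - 1))
    (hk : Measurable k)
    (hB : (⨆ x ∈ Ioi (0:ℝ),
      ENNReal.ofReal x * (∫⁻ y in Ioi x, k y ^ p') ^ (q / p')) < ⊤) :
    ∃ c > 0, ∀ f : ℝ → ℝ≥0∞, Measurable f →
      (∫⁻ x in Ioi (0:ℝ), (∫⁻ y in Ioi x, k y * f y) ^ q) ^ (1 / q) ≤
        ENNReal.ofReal c * (∫⁻ y in Ioi (0:ℝ), f y ^ p) ^ (1 / p) := by
  have hpc := conj_facts' hp hp'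
  have hp0 : (0:ℝ) < p := hpc.pos
  have hq0 : (0:ℝ) < q := lt_of_lt_of_le hp0 hpq
  have hp'0 : (0:ℝ) < p' := hpc.symm.pos
  have hp'1 : 1 < p' := hpc.symm.lt
  have hqp'0 : (0:ℝ) < q / p' := div_pos hq0 hp'0
  have hr1 : (1:ℝ) ≤ q / p := (le_div_iff₀ hp0).2 (by linarith)
  have hkp : Measurable fun y => k y ^ p' := hk.pow_const p'
  set ν : Measure ℝ := volume.withDensity (fun y => k y ^ p') with hν
  set W : ℝ → ℝ≥0∞ := fun x => ν (Ioi x) with hW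
  have hWint : ∀ x, W x = ∫⁻ y in Ioi x, k y ^ p' := fun x =>
    withDensity_apply _ measurableSet_Ioi
  have hWanti : Antitone W := fun a b hab => measure_mono (Ioi_subset_Ioi hab)
  set B : ℝ≥0∞ := ⨆ x ∈ Ioi (0:ℝ),
      ENNReal.ofReal x * (∫⁻ y in Ioi x, k y ^ p') ^ (q / p') with hBdef
  have hBt : B ≠ ⊤ := hB.ne
  have hWle : ∀ x, 0 < x → ENNReal.ofReal x * W x ^ (q / p') ≤ B := by
    intro x hx
    rw [hWint]
    exact le_iSup₂_of_le x hx le_rfl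
  have hWfin : ∀ x, 0 < x → W x ≠ ⊤ := by
    intro x hx hcon
    have := hWle x hx
    rw [hcon, ENNReal.top_rpow_of_pos hqp'0, ENNReal.mul_top
      (by simp [hx, ENNReal.ofReal_eq_zero, not_le])] at this
    exact hBt (top_le_iff.mp this)
  -- the dyadic levels
  set e : ℤ → ℝ≥0∞ := fun j => (2:ℝ≥0∞) ^ (-(j:ℝ)) with he
  have he0 : ∀ j, e j ≠ 0 := by
    intro j
    simp [he, ENNReal.rpow_eq_zero_iff]
  have heT : ∀ j, e j ≠ ⊤ := by
    intro j
    simp [he, ENNReal.rpow_eq_top_iff]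
  have he_anti : ∀ i j : ℤ, i ≤ j → e j ≤ e i := by
    intro i j hij
    exact ENNReal.rpow_le_rpow_of_exponent_le (by norm_num) (neg_le_neg (by exact_mod_cast hij))
  have he_add : ∀ a b : ℤ, e (a + b) = e a * e b := by
    intro a b
    rw [he]
    simp only
    rw [← ENNReal.rpow_add _ _ (by norm_num) (by norm_num)]
    push_cast
    ring_nf
  -- nonemptiness of the level sets
  have hS_ne : ∀ j : ℤ, ∃ x : ℝ, 0 < x ∧ W x ≤ e j := by
    intro j
    by_cases h1 : W 1 ≤ e j
    · exact ⟨1, one_pos, h1⟩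
    rw [not_le] at h1
    have hW1t : W 1 ≠ ⊤ := hWfin 1 one_pos
    have hmono : Monotone fun n : ℕ => Ioc (1:ℝ) (1 + n) := by
      intro a b hab
      exact Ioc_subset_Ioc_right (by exact_mod_cast add_le_add_right (Nat.cast_le.mpr hab) 1)
    have hunion : (⋃ n : ℕ, Ioc (1:ℝ) (1 + n)) = Ioi 1 := by
      ext y
      simp only [mem_iUnion, mem_Ioc, mem_Ioi]
      constructor
      · rintro ⟨n, hn, -⟩; exact hn
      · intro hy
        obtain ⟨n, hn⟩ := exists_nat_ge (y - 1)
        exact ⟨n, hy, by linarith⟩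
    have hsup : (⨆ n : ℕ, ν (Ioc (1:ℝ) (1 + n))) = W 1 := by
      show _ = ν (Ioi 1)
      rw [← hunion, hmono.directed_le.measure_iUnion]
    have hex : ∃ n : ℕ, W 1 - e j < ν (Ioc (1:ℝ) (1 + n)) := by
      rw [← lt_iSup_iff, hsup]
      exact ENNReal.sub_lt_self hW1t (fun h0 => (he0 j) (by exact le_antisymm (h0 ▸ h1.le) (zero_le) )) (he0 j)
    obtain ⟨n, hn⟩ := hex
    refine ⟨1 + n, by positivity, ?_⟩
    have hsplit : ν (Ioc (1:ℝ) (1 + n)) + W (1 + n) = W 1 := by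
      show _ + ν (Ioi ((1:ℝ) + n)) = ν (Ioi 1)
      rw [← measure_union (Ioc_disjoint_Ioi le_rfl) measurableSet_Ioi,
        Ioc_union_Ioi_eq_Ioi (by linarith [Nat.cast_nonneg (α := ℝ) n])]
    have hlt : W 1 < ν (Ioc (1:ℝ) (1 + n)) + e j := by
      have hej : e j ≤ W 1 := h1.le
      calc W 1 = W 1 - e j + e j := (tsub_add_cancel_of_le hej).symm
        _ < ν (Ioc (1:ℝ) (1 + n)) + e j := by
            exact ENNReal.add_lt_add_right (heT j) hn
    rw [← hsplit] at hlt
    have hνfin : ν (Ioc (1:ℝ) (1 + n)) ≠ ⊤ := by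
      refine ne_top_of_le_ne_top hW1t ?_
      rw [← hsplit]; exact le_self_add
    exact (ENNReal.add_lt_add_iff_left hνfin).mp hlt |>.le
  set m : ℤ → ℝ := fun j => sInf {x : ℝ | 0 < x ∧ W x ≤ e j} with hm
  have hm_bdd : ∀ j, BddBelow {x : ℝ | 0 < x ∧ W x ≤ e j} :=
    fun j => ⟨0, fun y hy => hy.1.le⟩
  have hm0 : ∀ j, 0 ≤ m j := fun j => le_csInf (hS_ne j) (fun y hy => hy.1.le)
  have hm_mono : Monotone m := by
    intro i j hij
    exact csInf_le_csInf (hm_bdd i) (hS_ne j) (fun y hy => ⟨hy.1, hy.2.trans (he_anti i j hij)⟩)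
  have hm_le : ∀ (j : ℤ) (z : ℝ), m j < z → W z ≤ e j := by
    intro j z hz
    obtain ⟨w, hw, hwz⟩ := exists_lt_of_csInf_lt (hS_ne j) hz
    exact (hWanti hwz.le).trans hw.2
  have hm_gt : ∀ (j : ℤ) (z : ℝ), 0 < z → z < m j → e j < W z := by
    intro j z hz0 hz
    by_contra hcon
    rw [not_lt] at hcon
    exact absurd (csInf_le (hm_bdd j) ⟨hz0, hcon⟩) (not_le.mpr hz)
  have hν_Ioc : ∀ (j : ℤ) (b : ℝ), ν (Ioc (m j) b) ≤ e j := by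
    intro j b
    by_cases hmb : b ≤ m j
    · rw [Ioc_eq_empty (not_lt.mpr hmb)]
      simp
    rw [not_le] at hmb
    have hmono : Monotone fun n : ℕ => Ioc (m j + 1/(n+1)) b := by
      intro a b' hab'
      refine Ioc_subset_Ioc_left (add_le_add_right ?_ _)
      apply one_div_le_one_div_of_le (by positivity)
      exact_mod_cast add_le_add_left (Nat.cast_le.mpr hab') 1
    have hunion : (⋃ n : ℕ, Ioc (m j + 1/(n+1)) b) = Ioc (m j) b := by
      ext y
      simp only [mem_iUnion, mem_Ioc]
      constructor
      · rintro ⟨n, hn, hy⟩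
        refine ⟨lt_trans (lt_add_of_pos_right _ (by positivity)) hn, hy⟩
      · rintro ⟨hy1, hy2⟩
        obtain ⟨n, hn⟩ := exists_nat_one_div_lt (show (0:ℝ) < y - m j by linarith)
        exact ⟨n, by push_cast; linarith, hy2⟩
    calc ν (Ioc (m j) b) = ⨆ n : ℕ, ν (Ioc (m j + 1/(n+1)) b) := by
          rw [← hunion, hmono.directed_le.measure_iUnion]
      _ ≤ e j := by
          refine iSup_le fun n => ?_
          refine le_trans (measure_mono Ioc_subset_Ioi_self) ?_
          exact hm_le j _ (lt_add_of_pos_right _ (by positivity))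
  have hm_bound : ∀ j : ℤ, ENNReal.ofReal (m j) * (e j) ^ (q / p') ≤ 2 * B := by
    intro j
    rcases le_or_gt (m j) 0 with hj0 | hj0
    · rw [ENNReal.ofReal_eq_zero.mpr hj0, zero_mul]
      exact zero_le
    have h2 : 0 < m j / 2 := by linarith
    have h3 : m j / 2 < m j := by linarith
    have h4 : e j < W (m j / 2) := hm_gt j _ h2 h3
    have h5 : ENNReal.ofReal (m j) = 2 * ENNReal.ofReal (m j / 2) := by
      rw [show m j = 2 * (m j / 2) by ring, ENNReal.ofReal_mul (by norm_num)]
      norm_num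
    calc ENNReal.ofReal (m j) * (e j) ^ (q / p')
        = 2 * (ENNReal.ofReal (m j / 2) * (e j) ^ (q / p')) := by rw [h5]; ring
      _ ≤ 2 * (ENNReal.ofReal (m j / 2) * (W (m j / 2)) ^ (q / p')) := by
          exact mul_le_mul_right (mul_le_mul_right (ENNReal.rpow_le_rpow h4.le hqp'0.le) _) _
      _ ≤ 2 * B := mul_le_mul_right (hWle _ h2) _
  -- useful identities for e
  have he_nat : ∀ n : ℕ, e (n:ℤ) = 2⁻¹ ^ n := by
    intro n
    rw [he]
    simp only [Int.cast_natCast]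
    rw [ENNReal.rpow_neg, ENNReal.rpow_natCast, ENNReal.inv_pow]
  have he_negnat : ∀ n : ℕ, e (-(n:ℤ)) = 2 ^ n := by
    intro n
    rw [he]
    simp only [Int.cast_neg, Int.cast_natCast, neg_neg]
    rw [ENNReal.rpow_natCast]
  -- constants
  set η : ℝ := (2 * p')⁻¹ with hη
  have hη0 : 0 < η := by rw [hη]; positivity
  set δ : ℝ := p * η with hδdef
  have hδ0 : 0 < δ := by rw [hδdef]; positivity
  obtain ⟨C, hCt, hC⟩ := discrete_step hδ0 hr1
  set C1 : ℝ≥0∞ := ∑' n : ℕ, (2:ℝ≥0∞) ^ (-(n:ℝ) * 2⁻¹) with hC1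
  have hC1t : C1 ≠ ⊤ := geom_lt_top (by norm_num)
  set K : ℝ≥0∞ := 2 * (2:ℝ≥0∞) ^ (q/p') * C1 ^ (q/p') * B * C with hK
  have hKt : K ≠ ⊤ := by
    rw [hK]
    refine ENNReal.mul_ne_top (ENNReal.mul_ne_top (ENNReal.mul_ne_top (ENNReal.mul_ne_top
      (by norm_num) ?_) ?_) hBt) hCt
    · exact (ENNReal.rpow_lt_top_of_nonneg hqp'0.le (by norm_num)).ne
    · exact (ENNReal.rpow_lt_top_of_nonneg hqp'0.le hC1t).ne
  refine ⟨(K ^ (1/q)).toReal + 1, by positivity, ?_⟩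
  intro f hf
  have hcK : K ^ (1/q) ≤ ENNReal.ofReal ((K ^ (1/q)).toReal + 1) := by
    have hKq : K ^ (1/q) ≠ ⊤ := (ENNReal.rpow_lt_top_of_nonneg (by positivity) hKt).ne
    calc K ^ (1/q) = ENNReal.ofReal ((K ^ (1/q)).toReal) := (ENNReal.ofReal_toReal hKq).symm
      _ ≤ _ := ENNReal.ofReal_le_ofReal (by linarith)
  set F : ℝ≥0∞ := ∫⁻ y in Ioi (0:ℝ), f y ^ p with hF
  set T : ℝ → ℝ≥0∞ := fun x => ∫⁻ y in Ioi x, k y * f y with hT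
  set cc : ℤ → ℝ≥0∞ := fun i => ∫⁻ y in Ioc (m i) (m (i+1)), f y ^ p with hcc
  set Z : Set ℝ := {y : ℝ | 0 < y ∧ W y = 0} with hZ
  have hWmeas : Measurable W := hWanti.measurable
  have hZmeas : MeasurableSet Z := by
    have hZeq : Z = Ioi 0 ∩ W ⁻¹' {0} := by
      ext y; simp [hZ, mem_Ioi]
    rw [hZeq]
    exact measurableSet_Ioi.inter (hWmeas (measurableSet_singleton 0))
  have hmain : ∫⁻ x in Ioi (0:ℝ), T x ^ q ≤ K * F ^ (q/p) := by
    -- (a) T vanishes where W vanishes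
    have hTa : ∀ x : ℝ, W x = 0 → T x = 0 := by
      intro x hx0
      have h1 : (fun y => k y ^ p') =ᵐ[volume.restrict (Ioi x)] 0 := by
        rw [← lintegral_eq_zero_iff hkp]
        rw [← hWint]; exact hx0
      have h2 : (fun y => k y * f y) =ᵐ[volume.restrict (Ioi x)] 0 := by
        filter_upwards [h1] with y hy
        have hky : k y = 0 := by
          have hy' : k y ^ p' = 0 := hy
          simpa [ENNReal.rpow_eq_zero_iff, hp'0, hp'0.not_gt] using hy'
        simp [hky]
      show (∫⁻ y in Ioi x, k y * f y) = 0
      rw [lintegral_congr_ae h2]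
      simp
    -- (c) integral over Z vanishes
    have hZint : ∫⁻ y in Z, k y * f y = 0 := by
      rcases eq_empty_or_nonempty Z with hZe | hZne
      · rw [hZe]; simp
      have hZbdd : BddBelow Z := ⟨0, fun y hy => hy.1.le⟩
      set c0 : ℝ := sInf Z with hc0
      have hzn : ∀ n : ℕ, ∃ z ∈ Z, z < c0 + 1/(n+1) :=
        fun n => exists_lt_of_csInf_lt hZne (lt_add_of_pos_right _ (by positivity))
      choose z hzZ hzlt using hzn
      refine le_antisymm ?_ (zero_le)
      have hcov : Z ⊆ {c0} ∪ ⋃ n : ℕ, Ioi (z n) := by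
        intro y hy
        rcases eq_or_lt_of_le (csInf_le hZbdd hy) with h | h
        · exact Or.inl (by simp [← h, hc0])
        · obtain ⟨n, hn⟩ := exists_nat_one_div_lt (show (0:ℝ) < y - c0 by linarith)
          refine Or.inr (mem_iUnion.mpr ⟨n, ?_⟩)
          have h2 := hzlt n
          simp only [mem_Ioi]
          push_cast at hn h2 ⊢
          linarith
      calc ∫⁻ y in Z, k y * f y ≤ ∫⁻ y in {c0} ∪ ⋃ n : ℕ, Ioi (z n), k y * f y :=
            lintegral_mono_set hcov
        _ ≤ (∫⁻ y in {c0}, k y * f y) + ∫⁻ y in ⋃ n : ℕ, Ioi (z n), k y * f y :=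
            lintegral_union_le _ _ _
        _ ≤ 0 + ∑' n : ℕ, ∫⁻ y in Ioi (z n), k y * f y :=
            add_le_add (le_of_eq (setLIntegral_measure_zero _ _ (measure_singleton c0)))
              (lintegral_iUnion_le _ _)
        _ ≤ 0 := by
            rw [zero_add]
            have hz0 : ∀ n : ℕ, ∫⁻ y in Ioi (z n), k y * f y = 0 := fun n =>
              hTa (z n) (hzZ n).2
            simp [hz0]
    -- (d) Hoelder on each block
    have hHold : ∀ i : ℤ, ∫⁻ y in Ioc (m i) (m (i+1)), k y * f y ≤
        (e i) ^ (1/p') * (cc i) ^ (1/p) := by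
      intro i
      have h1 := ENNReal.lintegral_mul_le_Lp_mul_Lq (volume.restrict (Ioc (m i) (m (i+1))))
        hpc hf.aemeasurable hk.aemeasurable
      have h2 : ∫⁻ y in Ioc (m i) (m (i+1)), k y * f y =
          ∫⁻ y in Ioc (m i) (m (i+1)), (f * k) y := by
        refine lintegral_congr fun y => ?_
        simp [mul_comm]
      have h3 : (∫⁻ y in Ioc (m i) (m (i+1)), k y ^ p') ≤ e i := by
        rw [← withDensity_apply _ measurableSet_Ioc]
        exact hν_Ioc i _
      calc ∫⁻ y in Ioc (m i) (m (i+1)), k y * f y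
          ≤ (∫⁻ y in Ioc (m i) (m (i+1)), f y ^ p) ^ (1/p) *
            (∫⁻ y in Ioc (m i) (m (i+1)), k y ^ p') ^ (1/p') := by rw [h2]; exact h1
        _ ≤ (cc i) ^ (1/p) * (e i) ^ (1/p') :=
            mul_le_mul_right (ENNReal.rpow_le_rpow h3 (by positivity)) _
        _ = (e i) ^ (1/p') * (cc i) ^ (1/p) := mul_comm _ _
    -- (e) covering lemmas
    have hcover : ∀ y : ℝ, 0 < y → W y ≠ 0 → ∀ j : ℤ, m j < y →
        ∃ n : ℕ, y ∈ Ioc (m (j + n)) (m (j + n + 1)) := by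
      intro y hy0 hWy j hjy
      have hSu : ∃ i : ℤ, y ≤ m i := by
        by_contra hcon
        push_neg at hcon
        obtain ⟨n, hn⟩ := ENNReal.exists_inv_two_pow_lt hWy
        exact absurd (hm_le (n:ℤ) y (hcon _)) (by rw [he_nat]; exact not_le.mpr hn)
      have hbdd : ∀ i ∈ {i : ℤ | y ≤ m i}, j + 1 ≤ i := by
        intro i hi
        by_contra hcon
        push_neg at hcon
        have hle : m i ≤ m j := hm_mono (by omega)
        exact absurd hi (not_le.mpr (lt_of_le_of_lt hle hjy))
      obtain ⟨I, hI, hIleast⟩ := Int.exists_least_of_bdd ⟨j+1, hbdd⟩ hSu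
      have hI1 : j + 1 ≤ I := hbdd I hI
      have hImem : m (I - 1) < y := by
        by_contra hcon
        push_neg at hcon
        have := hIleast (I-1) hcon
        omega
      refine ⟨(I - 1 - j).toNat, ?_⟩
      have hn : j + ((I - 1 - j).toNat : ℤ) = I - 1 := by omega
      rw [hn]
      exact ⟨hImem, by rw [show I - 1 + 1 = I by ring]; exact hI⟩
    have houter : ∀ y : ℝ, 0 < y → ∃ j : ℤ, m j < y := by
      intro y hy0
      by_contra hcon
      push_neg at hcon
      have hz : 0 < y/2 := by linarith
      obtain ⟨n, hn⟩ := ENNReal.exists_nat_gt (hWfin _ hz)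
      have h1 : e (-(n:ℤ)) < W (y/2) :=
        hm_gt _ _ hz (lt_of_lt_of_le (by linarith) (hcon _))
      rw [he_negnat] at h1
      have h2 : W (y/2) < 2 ^ n := by
        refine hn.trans_le ?_
        have h3 : ((n:ℕ):ℝ≥0∞) ≤ ((2^n : ℕ) : ℝ≥0∞) := Nat.cast_le.mpr (Nat.lt_two_pow_self (n := n)).le
        simpa using h3
      exact absurd (h1.trans h2) (lt_irrefl _)
    -- (f) pointwise bound on T
    set S : ℤ → ℝ≥0∞ := fun j => ∑' n : ℕ, (e (j + n)) ^ (1/p') * (cc (j + n)) ^ (1/p)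
      with hSdef
    have key2 : ∀ j : ℤ, ∀ x : ℝ, m j < x → 0 < x → T x ≤ S j := by
      intro j x hjx hx0
      have hsub : Ioi x ⊆ Z ∪ ⋃ n : ℕ, Ioc (m (j + n)) (m (j + n + 1)) := by
        intro y hy
        rw [mem_Ioi] at hy
        have hy0 : 0 < y := lt_trans hx0 hy
        by_cases hWy : W y = 0
        · exact Or.inl ⟨hy0, hWy⟩
        · obtain ⟨n, hn⟩ := hcover y hy0 hWy j (lt_trans hjx hy)
          exact Or.inr (mem_iUnion.mpr ⟨n, hn⟩)
      calc T x ≤ ∫⁻ y in Z ∪ ⋃ n : ℕ, Ioc (m (j + n)) (m (j + n + 1)), k y * f y :=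
            lintegral_mono_set hsub
        _ ≤ (∫⁻ y in Z, k y * f y) +
            ∫⁻ y in ⋃ n : ℕ, Ioc (m (j + n)) (m (j + n + 1)), k y * f y :=
            lintegral_union_le _ _ _
        _ ≤ 0 + ∑' n : ℕ, ∫⁻ y in Ioc (m (j + n)) (m (j + n + 1)), k y * f y :=
            add_le_add (le_of_eq hZint) (lintegral_iUnion_le _ _)
        _ ≤ S j := by
            rw [zero_add, hSdef]
            exact ENNReal.tsum_le_tsum fun n => hHold (j + n)
    have hepow_ne0 : ∀ j : ℤ, (e j) ^ (q/p') ≠ 0 := fun j => by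
      simp [ENNReal.rpow_eq_zero_iff, he0 j, heT j]
    have hepow_neT : ∀ j : ℤ, (e j) ^ (q/p') ≠ ⊤ := fun j => by
      simp [ENNReal.rpow_eq_top_iff, he0 j, heT j]
    -- (g) block estimate
    have key3 : ∀ j : ℤ, ∫⁻ x in Ioc (m j) (m (j+1)), T x ^ q ≤
        2 * B * (e (j+1)) ^ (-(q/p')) * S j ^ q := by
      intro j
      have hb1 : ENNReal.ofReal (m (j+1)) ≤ 2 * B * (e (j+1)) ^ (-(q/p')) := by
        have h := hm_bound (j+1)
        rw [← ENNReal.le_div_iff_mul_le (Or.inl (hepow_ne0 _)) (Or.inl (hepow_neT _))] at h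
        rw [ENNReal.rpow_neg, ← div_eq_mul_inv]
        exact h
      calc ∫⁻ x in Ioc (m j) (m (j+1)), T x ^ q ≤ ∫⁻ _ in Ioc (m j) (m (j+1)), S j ^ q :=
            setLIntegral_mono' measurableSet_Ioc fun x hx =>
              ENNReal.rpow_le_rpow (key2 j x hx.1 (lt_of_le_of_lt (hm0 j) hx.1)) hq0.le
        _ = S j ^ q * volume (Ioc (m j) (m (j+1))) := setLIntegral_const _ _
        _ ≤ S j ^ q * ENNReal.ofReal (m (j+1)) := by
            rw [Real.volume_Ioc]
            exact mul_le_mul_right (ENNReal.ofReal_le_ofReal (by linarith [hm0 j])) _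
        _ ≤ S j ^ q * (2 * B * (e (j+1)) ^ (-(q/p'))) := mul_le_mul_right hb1 _
        _ = 2 * B * (e (j+1)) ^ (-(q/p')) * S j ^ q := mul_comm _ _
    -- (h) outer splitting
    have hZq : ∫⁻ x in Z, T x ^ q = 0 := by
      have hptw : ∀ x ∈ Z, T x ^ q ≤ 0 := by
        intro x hx
        rw [hTa x hx.2, ENNReal.zero_rpow_of_pos hq0]
      exact le_antisymm ((setLIntegral_mono' hZmeas hptw).trans (by simp)) (zero_le)
    have hsplit : ∫⁻ x in Ioi (0:ℝ), T x ^ q ≤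
        ∑' j : ℤ, ∫⁻ x in Ioc (m j) (m (j+1)), T x ^ q := by
      have hsub : Ioi (0:ℝ) ⊆ Z ∪ ⋃ j : ℤ, Ioc (m j) (m (j+1)) := by
        intro y hy
        rw [mem_Ioi] at hy
        by_cases hWy : W y = 0
        · exact Or.inl ⟨hy, hWy⟩
        · obtain ⟨j, hj⟩ := houter y hy
          obtain ⟨n, hn⟩ := hcover y hy hWy j hj
          exact Or.inr (mem_iUnion.mpr ⟨j + n, hn⟩)
      calc ∫⁻ x in Ioi (0:ℝ), T x ^ q
          ≤ ∫⁻ x in Z ∪ ⋃ j : ℤ, Ioc (m j) (m (j+1)), T x ^ q := lintegral_mono_set hsub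
        _ ≤ (∫⁻ x in Z, T x ^ q) + ∫⁻ x in ⋃ j : ℤ, Ioc (m j) (m (j+1)), T x ^ q :=
            lintegral_union_le _ _ _
        _ ≤ 0 + ∑' j : ℤ, ∫⁻ x in Ioc (m j) (m (j+1)), T x ^ q :=
            add_le_add (le_of_eq hZq) (lintegral_iUnion_le _ _)
        _ = _ := zero_add _
    -- (i) Hoelder on the tail sums
    set TT : ℤ → ℝ≥0∞ := fun j => ∑' n : ℕ, (2:ℝ≥0∞) ^ (-(n:ℝ) * δ) * cc (j + n) with hTT
    have hSA : ∀ j : ℤ, S j ≤ (e j) ^ (1/p') * (C1 ^ (1/p') * TT j ^ (1/p)) := by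
      intro j
      have hterm : ∀ n : ℕ, (e (j + n)) ^ (1/p') * (cc (j + n)) ^ (1/p) =
          (e j) ^ (1/p') * ((e (n:ℤ)) ^ η * ((e (n:ℤ)) ^ η * (cc (j + n)) ^ (1/p))) := by
        intro n
        have hsplit2 : (e (n:ℤ)) ^ ((1:ℝ)/p') = (e (n:ℤ)) ^ η * (e (n:ℤ)) ^ η := by
          rw [← ENNReal.rpow_add _ _ (he0 _) (heT _)]
          congr 1
          rw [hη]; field_simp; ring
        rw [he_add j n, ENNReal.mul_rpow_of_ne_top (heT j) (heT _), hsplit2]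
        ring
      rw [hSdef]
      simp only
      rw [tsum_congr hterm, ENNReal.tsum_mul_left]
      refine mul_le_mul_right ?_ _
      have hH := tsum_mul_le_Lp_mul_Lq' hpc.symm
        (fun n : ℕ => (e (n:ℤ)) ^ η) (fun n : ℕ => (e (n:ℤ)) ^ η * (cc (j + n)) ^ (1/p))
      have e1 : ∀ n : ℕ, ((e (n:ℤ)) ^ η) ^ p' = (2:ℝ≥0∞) ^ (-(n:ℝ) * 2⁻¹) := by
        intro n
        rw [he]
        simp only [Int.cast_natCast]
        rw [← ENNReal.rpow_mul, ← ENNReal.rpow_mul]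
        congr 1
        rw [hη]
        field_simp
      have e2 : ∀ n : ℕ, ((e (n:ℤ)) ^ η * (cc (j + n)) ^ (1/p)) ^ p =
          (2:ℝ≥0∞) ^ (-(n:ℝ) * δ) * cc (j + n) := by
        intro n
        rw [ENNReal.mul_rpow_of_nonneg _ _ hp0.le]
        congr 1
        · rw [he]
          simp only [Int.cast_natCast]
          rw [← ENNReal.rpow_mul, ← ENNReal.rpow_mul]
          congr 1
          rw [hδdef]
          ring
        · rw [← ENNReal.rpow_mul, one_div, inv_mul_cancel₀ hp0.ne', ENNReal.rpow_one]
      rw [tsum_congr e1, tsum_congr e2] at hH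
      rw [hC1, hTT]
      exact hH
    have hSB : ∀ j : ℤ, 2 * B * (e (j+1)) ^ (-(q/p')) * S j ^ q ≤
        2 * B * (2:ℝ≥0∞) ^ (q/p') * C1 ^ (q/p') * TT j ^ (q/p) := by
      intro j
      have h1 : S j ^ q ≤ (e j) ^ (q/p') * (C1 ^ (q/p') * TT j ^ (q/p)) := by
        calc S j ^ q ≤ ((e j) ^ (1/p') * (C1 ^ (1/p') * TT j ^ (1/p))) ^ q :=
              ENNReal.rpow_le_rpow (hSA j) hq0.le
          _ = (e j) ^ (q/p') * (C1 ^ (q/p') * TT j ^ (q/p)) := by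
              have g1 : ((e j) ^ ((1:ℝ)/p')) ^ q = (e j) ^ (q/p') := by
                rw [show q/p' = 1/p' * q by ring]
                exact (ENNReal.rpow_mul _ _ _).symm
              have g2 : (C1 ^ ((1:ℝ)/p')) ^ q = C1 ^ (q/p') := by
                rw [show q/p' = 1/p' * q by ring]
                exact (ENNReal.rpow_mul _ _ _).symm
              have g3 : (TT j ^ ((1:ℝ)/p)) ^ q = TT j ^ (q/p) := by
                rw [show q/p = 1/p * q by ring]
                exact (ENNReal.rpow_mul _ _ _).symm
              rw [ENNReal.mul_rpow_of_nonneg _ _ hq0.le,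
                ENNReal.mul_rpow_of_nonneg _ _ hq0.le, g1, g2, g3]
      have h2 : (e (j+1)) ^ (-(q/p')) = (e j) ^ (-(q/p')) * (2:ℝ≥0∞) ^ (q/p') := by
        rw [he_add j 1, ENNReal.mul_rpow_of_ne_top (heT j) (heT 1)]
        congr 1
        rw [he]
        simp only [Int.cast_one]
        rw [← ENNReal.rpow_mul]
        norm_num
      calc 2 * B * (e (j+1)) ^ (-(q/p')) * S j ^ q
          ≤ 2 * B * ((e j) ^ (-(q/p')) * (2:ℝ≥0∞) ^ (q/p')) *
            ((e j) ^ (q/p') * (C1 ^ (q/p') * TT j ^ (q/p))) := by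
            rw [← h2]; exact mul_le_mul_right h1 _
        _ = 2 * B * (2:ℝ≥0∞) ^ (q/p') * C1 ^ (q/p') * TT j ^ (q/p) *
            ((e j) ^ (-(q/p')) * (e j) ^ (q/p')) := by ring
        _ = 2 * B * (2:ℝ≥0∞) ^ (q/p') * C1 ^ (q/p') * TT j ^ (q/p) := by
            rw [← ENNReal.rpow_add _ _ (he0 j) (heT j), neg_add_cancel,
              ENNReal.rpow_zero, mul_one]
    -- (j) disjointness
    have hccF : ∑' i : ℤ, cc i ≤ F := by
      have hdisj : Pairwise (Function.onFun Disjoint fun i : ℤ => Ioc (m i) (m (i+1))) := by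
        have hwork : ∀ i j : ℤ, i < j →
            Disjoint (Ioc (m i) (m (i+1))) (Ioc (m j) (m (j+1))) := by
          intro i j hij
          rw [Set.Ioc_disjoint_Ioc]
          exact le_max_of_le_right ((min_le_left _ _).trans (hm_mono (by omega)))
        intro i j hij
        rcases lt_or_gt_of_ne hij with h | h
        · exact hwork i j h
        · exact (hwork j i h).symm
      rw [hcc]
      calc ∑' i : ℤ, ∫⁻ y in Ioc (m i) (m (i+1)), f y ^ p
          = ∫⁻ y in ⋃ i : ℤ, Ioc (m i) (m (i+1)), f y ^ p :=
            (lintegral_iUnion (fun i => measurableSet_Ioc) hdisj _).symm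
        _ ≤ F := lintegral_mono_set (iUnion_subset fun i y hy =>
            lt_of_le_of_lt (hm0 i) hy.1)
    -- total
    have hdisc : ∑' j : ℤ, TT j ^ (q/p) ≤ C * (∑' i : ℤ, cc i) ^ (q/p) := by
      rw [hTT]
      exact hC cc
    calc ∫⁻ x in Ioi (0:ℝ), T x ^ q
        ≤ ∑' j : ℤ, ∫⁻ x in Ioc (m j) (m (j+1)), T x ^ q := hsplit
      _ ≤ ∑' j : ℤ, 2 * B * (2:ℝ≥0∞) ^ (q/p') * C1 ^ (q/p') * TT j ^ (q/p) :=
          ENNReal.tsum_le_tsum fun j => (key3 j).trans (hSB j)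
      _ = 2 * B * (2:ℝ≥0∞) ^ (q/p') * C1 ^ (q/p') * ∑' j : ℤ, TT j ^ (q/p) :=
          ENNReal.tsum_mul_left
      _ ≤ 2 * B * (2:ℝ≥0∞) ^ (q/p') * C1 ^ (q/p') * (C * (∑' i : ℤ, cc i) ^ (q/p)) :=
          mul_le_mul_right hdisc _
      _ ≤ 2 * B * (2:ℝ≥0∞) ^ (q/p') * C1 ^ (q/p') * (C * F ^ (q/p)) :=
          mul_le_mul_right (mul_le_mul_right (ENNReal.rpow_le_rpow hccF (by positivity)) _) _
      _ = K * F ^ (q/p) := by rw [hK]; ring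
  calc (∫⁻ x in Ioi (0:ℝ), T x ^ q) ^ (1/q)
      ≤ (K * F ^ (q/p)) ^ (1/q) := ENNReal.rpow_le_rpow hmain (by positivity)
    _ = K ^ (1/q) * F ^ (1/p) := by
        rw [ENNReal.mul_rpow_of_nonneg _ _ (by positivity), ← ENNReal.rpow_mul,
          show q/p * (1/q) = 1/p by field_simp]
    _ ≤ ENNReal.ofReal ((K ^ (1/q)).toReal + 1) * F ^ (1/p) := mul_le_mul_left hcK _

end Suff


theorem statement13
    (p q p' : ℝ) (hp : 1 < p) (hpq : p ≤ q) (hp' : p' = p / (p - 1))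
    (k : ℝ → ℝ≥0∞) (hkmeas : Measurable k) :
    (∃ c > 0, ∀ f : ℝ → ℝ≥0∞, Measurable f →
      (∫⁻ x in Ioi (0:ℝ), (∫⁻ y in Ioi x, k y * f y) ^ q) ^ (1 / q) ≤
        ENNReal.ofReal c * (∫⁻ y in Ioi (0:ℝ), f y ^ p) ^ (1 / p)) ↔
    (⨆ x ∈ Ioi (0:ℝ),
      ENNReal.ofReal x * (∫⁻ y in Ioi x, k y ^ p') ^ (q / p')) < ⊤ := by
  constructor
  · rintro ⟨c, hc, hineq⟩
    exact necessity hp hpq hp' hkmeas hc hineq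
  · intro hB
    exact sufficiency hp hpq hp' hkmeas hB

end
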